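/- Let k be a field, L ⊆ ℤ⁴ the subgroup generated by (1,1,0,−1) and (0,1,1,−1), and let I'_irr ⊆ S = k[x₁,…,x₄,y₁,…,y₄] be the ideal ⟨x₁,x₃,x₄⟩ ∩ ⟨x₂⟩ ∩ ⟨y₁,y₃,y₄⟩ ∩ ⟨y₂⟩ (the irrelevant ideal of X_Σ × X_Σ for the chamber of the effective cone spanned by O(D₂) and O(D₄)). Then for every f ∈ I'_irr, both f · x₁⁻¹y₁ and f · x₃⁻¹y₃ lie in M_{Λ(L)}. In particular, the classes of x₁⁻¹y₁ and x₃⁻¹y₃ in T/M_{Λ(L)} are annihilated by I'_irr. -/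
import Mathlib


/-!
STATEMENT 9: for `L = ⟨(1,1,0,−1), (0,1,1,−1)⟩ ⊆ ℤ⁴` and the irrelevant ideal
`I'_irr = ⟨x₁,x₃,x₄⟩ ∩ ⟨x₂⟩ ∩ ⟨y₁,y₃,y₄⟩ ∩ ⟨y₂⟩` (for the other chamber of the effective
cone), multiplication by `x₁⁻¹y₁` and by `x₃⁻¹y₃` maps `I'_irr` into `M_{Λ(L)}`.
-/

noncomputable section

open MvPolynomial

/-- The Laurent polynomial ring `T = k[x₁^{±1},…,x₄^{±1},y₁^{±1},…,y₄^{±1}]`. -/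
abbrev LaurentT (k : Type*) [Field k] :=
  AddMonoidAlgebra k ((Fin 4 → ℤ) × (Fin 4 → ℤ))

/-- The polynomial ring `S = k[x₁,…,x₄,y₁,…,y₄]`; `Sum.inl i ↦ xᵢ₊₁`, `Sum.inr i ↦ yᵢ₊₁`. -/
abbrev PolyS (k : Type*) [Field k] := MvPolynomial (Fin 4 ⊕ Fin 4) k

/-- `xᵢ₊₁` (0-indexed). -/
def xv (k : Type*) [Field k] (i : Fin 4) : PolyS k := X (Sum.inl i)

/-- `yᵢ₊₁` (0-indexed). -/
def yv (k : Type*) [Field k] (i : Fin 4) : PolyS k := X (Sum.inr i)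

/-- The natural inclusion `S → T`. -/
def incl (k : Type*) [Field k] : PolyS k →+* LaurentT k :=
  MvPolynomial.eval₂Hom (algebraMap k (LaurentT k))
    (Sum.elim
      (fun i => AddMonoidAlgebra.single (Pi.single i 1, 0) (1 : k))
      (fun i => AddMonoidAlgebra.single (0, Pi.single i 1) (1 : k)))

/-- The lattice module `M_{Λ(L)} ⊆ T`. -/
def latticeModule (k : Type*) [Field k] (L : AddSubgroup (Fin 4 → ℤ)) :
    Submodule k (LaurentT k) :=
  Submodule.span k
    { t | ∃ (c d : Fin 4 → ℕ) (u : Fin 4 → ℤ), u ∈ L ∧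
        t = AddMonoidAlgebra.single
          ((fun i => (c i : ℤ)) + u, (fun i => (d i : ℤ)) - u) (1 : k) }

/-- The irrelevant ideal `⟨x₁,x₃,x₄⟩ ∩ ⟨x₂⟩ ∩ ⟨y₁,y₃,y₄⟩ ∩ ⟨y₂⟩` for the chamber of the
effective cone spanned by `O(D₂)` and `O(D₄)`. -/
def irrIdeal' (k : Type*) [Field k] : Ideal (PolyS k) :=
  Ideal.span {xv k 0, xv k 2, xv k 3} ⊓ Ideal.span {xv k 1}
    ⊓ Ideal.span {yv k 0, yv k 2, yv k 3} ⊓ Ideal.span {yv k 1}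

/-- The Laurent monomial `xᵢ⁻¹yᵢ ∈ T` (0-indexed). -/
def xinvy (k : Type*) [Field k] (i : Fin 4) : LaurentT k :=
  AddMonoidAlgebra.single (-(Pi.single i (1 : ℤ)), Pi.single i (1 : ℤ)) (1 : k)


namespace StmtAux

open AddMonoidAlgebra

variable (k : Type*) [Field k]

/-- cast of an `ℕ`-vector to `ℤ`. -/
def castZ (c : Fin 4 → ℕ) : Fin 4 → ℤ := fun i => (c i : ℤ)

lemma mem_gen (L : AddSubgroup (Fin 4 → ℤ)) (c d : Fin 4 → ℕ) {u : Fin 4 → ℤ}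
    (hu : u ∈ L) :
    AddMonoidAlgebra.single (castZ c + u, castZ d - u) (1 : k) ∈ latticeModule k L :=
  Submodule.subset_span ⟨c, d, u, hu, rfl⟩

lemma castZ_add_single (c : Fin 4 → ℕ) (i : Fin 4) :
    castZ (c + Pi.single i 1) = castZ c + Pi.single i 1 := by
  funext j
  simp [castZ, Pi.single_apply, apply_ite (Nat.cast : ℕ → ℤ)]

lemma incl_X (v : Fin 4 ⊕ Fin 4) :
    incl k (X v) = Sum.elim
      (fun i => AddMonoidAlgebra.single ((Pi.single i 1 : Fin 4 → ℤ), 0) (1 : k))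
      (fun i => AddMonoidAlgebra.single ((0 : Fin 4 → ℤ), Pi.single i 1) (1 : k)) v := by
  simp [incl]

lemma incl_X_mul_mem (L : AddSubgroup (Fin 4 → ℤ)) (v : Fin 4 ⊕ Fin 4) {t : LaurentT k}
    (ht : t ∈ latticeModule k L) : incl k (X v) * t ∈ latticeModule k L := by
  induction ht using Submodule.span_induction with
  | mem t hmem =>
    obtain ⟨c, d, u, hu, rfl⟩ := hmem
    rw [incl_X]
    rcases v with i | i
    · rw [Sum.elim_inl, AddMonoidAlgebra.single_mul_single, one_mul, Prod.mk_add_mk]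
      have ha : Pi.single i (1 : ℤ) + ((fun j => ((c j : ℕ) : ℤ)) + u)
          = castZ (c + Pi.single i 1) + u := by
        rw [castZ_add_single]
        show Pi.single i (1 : ℤ) + (castZ c + u) = castZ c + Pi.single i 1 + u
        abel
      have hb : (0 : Fin 4 → ℤ) + ((fun j => ((d j : ℕ) : ℤ)) - u) = castZ d - u := by
        show (0 : Fin 4 → ℤ) + (castZ d - u) = castZ d - u
        exact zero_add _
      rw [ha, hb]
      exact mem_gen k L _ _ hu
    · rw [Sum.elim_inr, AddMonoidAlgebra.single_mul_single, one_mul, Prod.mk_add_mk]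
      have ha : (0 : Fin 4 → ℤ) + ((fun j => ((c j : ℕ) : ℤ)) + u) = castZ c + u := by
        show (0 : Fin 4 → ℤ) + (castZ c + u) = castZ c + u
        exact zero_add _
      have hb : Pi.single i (1 : ℤ) + ((fun j => ((d j : ℕ) : ℤ)) - u)
          = castZ (d + Pi.single i 1) - u := by
        rw [castZ_add_single]
        show Pi.single i (1 : ℤ) + (castZ d - u) = castZ d + Pi.single i 1 - u
        abel
      rw [ha, hb]
      exact mem_gen k L _ _ hu
  | zero => simp [zero_mem]
  | add x y hx hy ihx ihy => rw [mul_add]; exact add_mem ihx ihy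
  | smul a x hx ih => rw [mul_smul_comm]; exact Submodule.smul_mem _ _ ih

lemma incl_mul_mem (L : AddSubgroup (Fin 4 → ℤ)) (f : PolyS k) :
    ∀ t ∈ latticeModule k L, incl k f * t ∈ latticeModule k L := by
  induction f using MvPolynomial.induction_on with
  | C a =>
    intro t ht
    have : incl k (MvPolynomial.C a) = algebraMap k (LaurentT k) a := by simp [incl]
    rw [this, ← Algebra.smul_def]
    exact Submodule.smul_mem _ _ ht
  | add p q hp hq =>
    intro t ht
    rw [map_add, add_mul]
    exact add_mem (hp t ht) (hq t ht)
  | mul_X p v hp =>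
    intro t ht
    rw [map_mul, mul_assoc]
    exact hp _ (incl_X_mul_mem k L v ht)

lemma incl_XX (i j : Fin 4) :
    incl k (xv k i * yv k j)
      = AddMonoidAlgebra.single ((Pi.single i 1 : Fin 4 → ℤ), (Pi.single j 1 : Fin 4 → ℤ))
          (1 : k) := by
  rw [map_mul, xv, yv, incl_X, incl_X, Sum.elim_inl, Sum.elim_inr,
    AddMonoidAlgebra.single_mul_single, one_mul, Prod.mk_add_mk, add_zero, zero_add]

lemma case_mem (L : AddSubgroup (Fin 4 → ℤ)) (i j a : Fin 4) (c d : Fin 4 → ℕ)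
    (u : Fin 4 → ℤ) (hu : u ∈ L)
    (h1 : Pi.single i (1 : ℤ) + -Pi.single a 1 = castZ c + u)
    (h2 : Pi.single j (1 : ℤ) + Pi.single a 1 = castZ d - u) :
    incl k (xv k i * yv k j) * xinvy k a ∈ latticeModule k L := by
  rw [incl_XX, xinvy, AddMonoidAlgebra.single_mul_single, one_mul, Prod.mk_add_mk, h1, h2]
  exact mem_gen k L _ _ hu

/-- the exponent of `xᵢ yⱼ` as a finsupp. -/
def tE (i j : Fin 4) : (Fin 4 ⊕ Fin 4) →₀ ℕ :=
  Finsupp.single (Sum.inl i) 1 + Finsupp.single (Sum.inr j) 1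

lemma monomial_tE (i j : Fin 4) :
    (MvPolynomial.monomial (tE i j) (1 : k)) = xv k i * yv k j := by
  rw [xv, yv, MvPolynomial.X, MvPolynomial.X, MvPolynomial.monomial_mul, one_mul, tE]

lemma tE_le (i j : Fin 4) (m : (Fin 4 ⊕ Fin 4) →₀ ℕ)
    (h1 : m (Sum.inl i) ≠ 0) (h2 : m (Sum.inr j) ≠ 0) : tE i j ≤ m := by
  rw [Finsupp.le_def]
  intro a
  simp only [tE, Finsupp.add_apply, Finsupp.single_apply]
  rcases a with a | a
  · by_cases h : i = a
    · subst h
      rw [if_pos rfl, if_neg (by simp)]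
      omega
    · rw [if_neg (by simp [h]), if_neg (by simp)]
      omega
  · by_cases h : j = a
    · subst h
      rw [if_neg (by simp), if_pos rfl]
      omega
    · rw [if_neg (by simp), if_neg (by simp [h])]
      omega

end StmtAux

/-- For every `f ∈ I'_irr`, both `f · x₁⁻¹y₁` and `f · x₃⁻¹y₃` lie in `M_{Λ(L)}`. -/
theorem mul_mem_latticeModule_other_chamber (k : Type*) [Field k] :
    ∀ f ∈ irrIdeal' k,
      incl k f * xinvy k 0
          ∈ latticeModule k (AddSubgroup.closure {![1, 1, 0, -1], ![0, 1, 1, -1]})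
        ∧ incl k f * xinvy k 2
          ∈ latticeModule k (AddSubgroup.closure {![1, 1, 0, -1], ![0, 1, 1, -1]}) := by
  classical
  intro f hf
  rw [irrIdeal', Submodule.mem_inf, Submodule.mem_inf, Submodule.mem_inf] at hf
  obtain ⟨⟨⟨hA, hB⟩, hC⟩, hD⟩ := hf
  set Lg : AddSubgroup (Fin 4 → ℤ) := AddSubgroup.closure {![1, 1, 0, -1], ![0, 1, 1, -1]}
    with hLg
  have hu1 : (![1, 1, 0, -1] : Fin 4 → ℤ) ∈ Lg := AddSubgroup.subset_closure (by left; rfl)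
  have hu2 : (![0, 1, 1, -1] : Fin 4 → ℤ) ∈ Lg := AddSubgroup.subset_closure (by right; rfl)
  -- rewrite the two span-of-variables memberships via the monomial characterization
  have hA' : f ∈ Ideal.span (MvPolynomial.X '' {Sum.inl 0, Sum.inl 2, Sum.inl 3} :
      Set (PolyS k)) := by
    have : (MvPolynomial.X '' {Sum.inl 0, Sum.inl 2, Sum.inl 3} : Set (PolyS k))
        = {xv k 0, xv k 2, xv k 3} := by
      simp [xv, Set.image_insert_eq]
    rwa [this]
  have hD' : f ∈ Ideal.span (MvPolynomial.X '' {Sum.inr 1} : Set (PolyS k)) := by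
    have : (MvPolynomial.X '' {Sum.inr 1} : Set (PolyS k)) = {yv k 1} := by
      simp [yv]
    rwa [this]
  rw [MvPolynomial.mem_ideal_span_X_image] at hA' hD'
  -- f lies in the monomial ideal generated by x₁y₂, x₃y₂, x₄y₂
  have hJ : f ∈ Ideal.span ((fun s => MvPolynomial.monomial s (1 : k)) ''
      {StmtAux.tE 0 1, StmtAux.tE 2 1, StmtAux.tE 3 1}) := by
    rw [MvPolynomial.mem_ideal_span_monomial_image]
    intro m hm
    obtain ⟨v, hv, hvne⟩ := hA' m hm
    obtain ⟨w, hw, hwne⟩ := hD' m hm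
    rw [Set.mem_singleton_iff] at hw
    subst hw
    rcases hv with rfl | rfl | rfl
    · exact ⟨StmtAux.tE 0 1, by left; rfl, StmtAux.tE_le 0 1 m hvne hwne⟩
    · exact ⟨StmtAux.tE 2 1, by right; left; rfl, StmtAux.tE_le 2 1 m hvne hwne⟩
    · exact ⟨StmtAux.tE 3 1, by right; right; rfl, StmtAux.tE_le 3 1 m hvne hwne⟩
  clear hA' hD' hA hD hB hC
  -- now induct over the monomial ideal
  induction hJ using Submodule.span_induction with
  | mem g hg =>
    obtain ⟨t, ht, rfl⟩ := hg
    rcases ht with rfl | rfl | rfl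
    · simp only [StmtAux.monomial_tE]
      constructor
      · exact StmtAux.case_mem k Lg 0 1 0 ![0, 0, 0, 0] ![1, 1, 0, 0] 0 (zero_mem Lg)
          (by funext r; fin_cases r <;> simp [StmtAux.castZ, Pi.single_apply])
          (by funext r; fin_cases r <;> simp [StmtAux.castZ, Pi.single_apply])
      · exact StmtAux.case_mem k Lg 0 1 2 ![0, 0, 0, 0] ![1, 1, 0, 0]
          (![1, 1, 0, -1] - ![0, 1, 1, -1]) (sub_mem hu1 hu2)
          (by funext r; fin_cases r <;> simp [StmtAux.castZ, Pi.single_apply])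
          (by funext r; fin_cases r <;> simp [StmtAux.castZ, Pi.single_apply])
    · simp only [StmtAux.monomial_tE]
      constructor
      · exact StmtAux.case_mem k Lg 2 1 0 ![0, 0, 0, 0] ![0, 1, 1, 0]
          (![0, 1, 1, -1] - ![1, 1, 0, -1]) (sub_mem hu2 hu1)
          (by funext r; fin_cases r <;> simp [StmtAux.castZ, Pi.single_apply])
          (by funext r; fin_cases r <;> simp [StmtAux.castZ, Pi.single_apply])
      · exact StmtAux.case_mem k Lg 2 1 2 ![0, 0, 0, 0] ![0, 1, 1, 0] 0 (zero_mem Lg)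
          (by funext r; fin_cases r <;> simp [StmtAux.castZ, Pi.single_apply])
          (by funext r; fin_cases r <;> simp [StmtAux.castZ, Pi.single_apply])
    · simp only [StmtAux.monomial_tE]
      constructor
      · exact StmtAux.case_mem k Lg 3 1 0 ![0, 1, 0, 0] ![0, 0, 0, 1]
          (-![1, 1, 0, -1]) (neg_mem hu1)
          (by funext r; fin_cases r <;> simp [StmtAux.castZ, Pi.single_apply])
          (by funext r; fin_cases r <;> simp [StmtAux.castZ, Pi.single_apply])
      · exact StmtAux.case_mem k Lg 3 1 2 ![0, 1, 0, 0] ![0, 0, 0, 1]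
          (-![0, 1, 1, -1]) (neg_mem hu2)
          (by funext r; fin_cases r <;> simp [StmtAux.castZ, Pi.single_apply])
          (by funext r; fin_cases r <;> simp [StmtAux.castZ, Pi.single_apply])
  | zero => constructor <;> · rw [map_zero, zero_mul]; exact zero_mem _
  | add p q hp hq ihp ihq =>
    obtain ⟨ih1, ih2⟩ := ihp
    obtain ⟨ih3, ih4⟩ := ihq
    constructor <;> · rw [map_add, add_mul]; exact add_mem (by assumption) (by assumption)
  | smul a p hp ih =>
    obtain ⟨ih1, ih2⟩ := ih
    constructor <;>
      · rw [smul_eq_mul, map_mul, mul_assoc]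
        exact StmtAux.incl_mul_mem k Lg a _ (by assumption)


end
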